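/- Let V be a poset of dimension 2 with a unique maximal node m, at least two minimal nodes, satisfying: every nonempty intersection class [m/t] (height-one nodes whose only strict upper bound is m and whose only strict lower bound is the minimal node t) has cardinality 0 or |V|, every node of height one dominating two minimal nodes is unique if Λ_V = {q} is a singleton. Then under these hypotheses, q has height one and every minimal node of V lies below q. -/

import Mathlib

/-- In a proper simple `K`-poset of dimension 2 with unique maximal node `m`, more than one
minimal node, and `Λ_V = {q}`, the node `q` has height one and lies above every minimal node. -/
theorem simple_dim_two_tent {V : Type*} [PartialOrder V] (m : V)
    (hdim : Order.krullDim V = 2)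
    (hmax : IsMax m) (huniq : ∀ x : V, IsMax x → x = m)
    (hmins : ∃ a b : V, IsMin a ∧ IsMin b ∧ a ≠ b)
    (hproper : ∀ t : V, IsMin t →
      Cardinal.mk {x : V | {y : V | x < y} = {m} ∧ {y : V | y < x} = {t}} = 0 ∨
      Cardinal.mk {x : V | {y : V | x < y} = {m} ∧ {y : V | y < x} = {t}} = Cardinal.mk V)
    (H Λ : Set V)
    (hH : H = {v : V | v ≠ m ∧ (IsMin v ∨ (Order.height v = 1 ∧
      ∃ a b : V, IsMin a ∧ IsMin b ∧ a ≠ b ∧ a ≤ v ∧ b ≤ v))})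
    (hΛ : Λ = {v ∈ H | Order.height v = 1 ∨ ∀ h ∈ H, Order.height h = 1 → ¬ v ≤ h})
    (q : V) (hq : Λ = {q}) :
    Order.height q = 1 ∧ ∀ t : V, IsMin t → t ≤ q := by
  obtain ⟨a₀, b₀, ha₀, hb₀, hab₀⟩ := hmins
  have : Nonempty V := ⟨a₀⟩
  -- there is an element of height ≥ 2
  have hsup : (⨆ a : V, Order.height a : ℕ∞) = 2 := by
    have := Order.krullDim_eq_iSup_height_of_nonempty (α := V)
    rw [hdim] at this
    have h2 := this.symm
    rw [show ((2:WithBot ℕ∞)) = ((2:ℕ∞) : WithBot ℕ∞) from rfl] at h2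
    exact_mod_cast h2
  have ⟨x, hx2⟩ : ∃ x : V, 2 ≤ Order.height x := by
    by_contra hc
    push_neg at hc
    have : (⨆ a : V, Order.height a : ℕ∞) ≤ 1 := by
      apply iSup_le
      intro a
      exact Order.le_of_lt_add_one (by rw [one_add_one_eq_two]; exact hc a)
    rw [hsup] at this
    norm_num at this
  -- x is not minimal; get y < x
  have hxnm : ¬ IsMin x := by
    intro h
    rw [Order.height_eq_zero.mpr h] at hx2
    norm_num at hx2
  obtain ⟨y, hyx⟩ : ∃ y, y < x := by
    rw [not_isMin_iff] at hxnm; exact hxnm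
  -- x = m
  have hxm : x = m := by
    by_contra hne
    have : ¬ IsMax x := fun h => hne (huniq x h)
    obtain ⟨z, hxz⟩ : ∃ z, x < z := by rwa [not_isMax_iff] at this
    have hfin : Order.height x < ⊤ := by
      have h1 := Order.height_le_krullDim x
      rw [hdim] at h1
      rw [show ((2:WithBot ℕ∞)) = ((2:ℕ∞) : WithBot ℕ∞) from rfl] at h1
      have h1' : Order.height x ≤ (2 : ℕ∞) := by exact_mod_cast h1
      exact lt_of_le_of_lt h1' (by exact lt_top_iff_ne_top.mpr (by decide))
    have hlt : Order.height x < Order.height z := Order.height_strictMono hxz hfin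
    have h2 := Order.height_le_krullDim z
    rw [hdim] at h2
    rw [show ((2:WithBot ℕ∞)) = ((2:ℕ∞) : WithBot ℕ∞) from rfl] at h2
    have h2' : Order.height z ≤ (2 : ℕ∞) := by exact_mod_cast h2
    exact absurd ((lt_of_le_of_lt hx2 hlt).trans_le h2') (lt_irrefl _)
  -- hence m is not minimal
  have hmnm : ¬ IsMin m := fun h => absurd (h (hxm ▸ hyx).le) (not_le_of_gt (hxm ▸ hyx))
  -- every minimal node is in H
  have hminH : ∀ t : V, IsMin t → t ∈ H := by
    intro t ht
    rw [hH]
    exact ⟨fun h => hmnm (h ▸ ht), Or.inl ht⟩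
  have hqΛ : q ∈ Λ := hq ▸ rfl
  rw [hΛ] at hqΛ
  obtain ⟨hqH, hqcond⟩ := hqΛ
  -- height q = 1
  have hq1 : Order.height q = 1 := by
    by_contra hq1
    have hqmin : IsMin q := by
      rw [hH] at hqH
      rcases hqH.2 with h | h
      · exact h
      · exact absurd h.1 hq1
    -- pick a minimal node c ≠ q
    obtain ⟨c, hc, hcq⟩ : ∃ c : V, IsMin c ∧ c ≠ q := by
      by_cases h : a₀ = q
      · exact ⟨b₀, hb₀, fun hh => hab₀ (h.trans hh.symm ▸ rfl)⟩
      · exact ⟨a₀, ha₀, h⟩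
    by_cases hex : ∃ h ∈ H, Order.height h = 1 ∧ c ≤ h
    · obtain ⟨h, hhH, hh1, _⟩ := hex
      have : h ∈ Λ := by rw [hΛ]; exact ⟨hhH, Or.inl hh1⟩
      rw [hq] at this
      exact hq1 (this ▸ hh1)
    · push_neg at hex
      have : c ∈ Λ := by
        rw [hΛ]
        exact ⟨hminH c hc, Or.inr fun h hhH hh1 hle => hex h hhH hh1 hle⟩
      rw [hq] at this
      exact hcq this
  refine ⟨hq1, fun t ht => ?_⟩
  by_cases hex : ∃ h ∈ H, Order.height h = 1 ∧ t ≤ h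
  · obtain ⟨h, hhH, hh1, hth⟩ := hex
    have : h ∈ Λ := by rw [hΛ]; exact ⟨hhH, Or.inl hh1⟩
    rw [hq] at this
    exact this ▸ hth
  · push_neg at hex
    have : t ∈ Λ := by
      rw [hΛ]
      exact ⟨hminH t ht, Or.inr fun h hhH hh1 hle => hex h hhH hh1 hle⟩
    rw [hq] at this
    have : Order.height t = 1 := this ▸ hq1
    rw [Order.height_eq_zero.mpr ht] at this
    norm_num at this
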